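/- Let p, q be positive integers with 2 < p/q < 4 and p odd. In the circular clique K_{p/q}, for every closed walk W from vertex 0 there exists an integer d such that W ~ O^d, where O is the closed walk of length p whose (i+1)-th edge goes from i·⌈p/2⌉ mod p to (i+1)·⌈p/2⌉ mod p. Consequently the group of ~-classes of closed walks based at 0 is isomorphic to the integers Z. -/

import Mathlib

open SimpleGraph

variable {α β γ : Type*}

/-- Tensor (categorical) product of simple graphs. -/
def tensor (G : SimpleGraph α) (H : SimpleGraph β) : SimpleGraph (α × β) where
  Adj x y := G.Adj x.1 y.1 ∧ H.Adj x.2 y.2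
  symm := ⟨fun _ _ ⟨h1, h2⟩ => ⟨h1.symm, h2.symm⟩⟩
  loopless := ⟨fun x ⟨h1, _⟩ => G.irrefl h1⟩

/-- Projection of a walk in the tensor product to the first factor. -/
def projG {G : SimpleGraph α} {H : SimpleGraph β} :
    ∀ {x y : α × β}, (tensor G H).Walk x y → G.Walk x.1 y.1
  | _, _, SimpleGraph.Walk.nil => SimpleGraph.Walk.nil
  | _, _, SimpleGraph.Walk.cons h p => SimpleGraph.Walk.cons h.1 (projG p)

/-- Projection of a walk in the tensor product to the second factor. -/
def projH {G : SimpleGraph α} {H : SimpleGraph β} :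
    ∀ {x y : α × β}, (tensor G H).Walk x y → H.Walk x.2 y.2
  | _, _, SimpleGraph.Walk.nil => SimpleGraph.Walk.nil
  | _, _, SimpleGraph.Walk.cons h p => SimpleGraph.Walk.cons h.2 (projH p)

/-- One-step reduction: deleting a consecutive backtracking pair `e, e⁻¹`. -/
inductive RedStep (G : SimpleGraph α) : ∀ {u v : α}, G.Walk u v → G.Walk u v → Prop
  | cancel {u v a b : α} (h : G.Adj a b) (p : G.Walk u a) (q : G.Walk a v) :
      RedStep G (p.append (SimpleGraph.Walk.cons h (SimpleGraph.Walk.cons h.symm q)))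
        (p.append q)

/-- A walk is reduced if no backtracking cancellation applies to it. -/
def Reduced {G : SimpleGraph α} {u v : α} (W : G.Walk u v) : Prop :=
  ∀ W', ¬ RedStep G W W'

/-- Homotopy of walks: equivalence generated by cancellations. -/
def RedEquiv (G : SimpleGraph α) {u v : α} (W W' : G.Walk u v) : Prop :=
  Relation.EqvGen (fun p q => RedStep G p q) W W'

/-- One elementary step of square-equivalence. -/
inductive SqStep (G : SimpleGraph α) : ∀ {u v : α}, G.Walk u v → G.Walk u v → Prop
  | cancel {u v a b : α} (h : G.Adj a b) (p : G.Walk u a) (q : G.Walk a v) :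
      SqStep G (p.append (SimpleGraph.Walk.cons h (SimpleGraph.Walk.cons h.symm q)))
        (p.append q)
  | square {u v a b c d : α} (hab : G.Adj a b) (hbc : G.Adj b c) (had : G.Adj a d)
      (hdc : G.Adj d c) (p : G.Walk u a) (q : G.Walk c v) :
      SqStep G (p.append (SimpleGraph.Walk.cons hab (SimpleGraph.Walk.cons hbc q)))
        (p.append (SimpleGraph.Walk.cons had (SimpleGraph.Walk.cons hdc q)))

/-- Square-equivalence of walks. -/
def SqEquiv (G : SimpleGraph α) {u v : α} (W W' : G.Walk u v) : Prop :=
  Relation.EqvGen (fun p q => SqStep G p q) W W'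

/-- Natural-number power of a closed walk (iterated concatenation). -/
def wpow {G : SimpleGraph α} {u : α} (W : G.Walk u u) : ℕ → G.Walk u u
  | 0 => SimpleGraph.Walk.nil
  | n + 1 => W.append (wpow W n)

/-- Integer power of a closed walk. -/
def wzpow {G : SimpleGraph α} {u : α} (W : G.Walk u u) : ℤ → G.Walk u u
  | Int.ofNat n => wpow W n
  | Int.negSucc n => wpow W.reverse (n + 1)

/-- A walk `p` is a prefix of `q` (same starting vertex). -/
def WalkPrefix {G : SimpleGraph α} {u x y : α} (p : G.Walk u x) (q : G.Walk u y) : Prop :=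
  ∃ r : G.Walk x y, q = p.append r

/-- `K` is square-free: every square is trivial. -/
def SqFree (K : SimpleGraph γ) : Prop :=
  ∀ a b c d : γ, K.Adj a b → K.Adj b c → K.Adj c d → K.Adj d a → a = c ∨ b = d

/-- The circular clique `K_{p/q}` on `ZMod p`. -/
def circClique (p q : ℕ) : SimpleGraph (ZMod p) where
  Adj i j := i ≠ j ∧ ∃ k : ℕ, q ≤ k ∧ k ≤ p - q ∧ (j = i + (k : ZMod p) ∨ i = j + (k : ZMod p))
  symm := by
    constructor
    rintro i j ⟨hne, k, h1, h2, h3 | h3⟩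
    · exact ⟨hne.symm, k, h1, h2, Or.inr h3⟩
    · exact ⟨hne.symm, k, h1, h2, Or.inl h3⟩
  loopless := ⟨fun i h => h.1 rfl⟩



namespace CCPI
open SimpleGraph

variable {p q : ℕ}

/-- displacement of a step, as a natural number in `[0, p)`. -/
def dd (u v : ZMod p) : ℕ := (v - u).val

/-- signed doubled displacement. -/
def rr (u v : ZMod p) : ℤ := 2 * (dd u v : ℤ) - (p : ℤ)

lemma dd_lt (hp : 0 < p) (u v : ZMod p) : dd u v < p := by
  haveI : NeZero p := ⟨hp.ne'⟩; exact ZMod.val_lt _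

lemma cast_dd (hp : 0 < p) (u v : ZMod p) : ((dd u v : ℕ) : ZMod p) = v - u := by
  haveI : NeZero p := ⟨hp.ne'⟩; exact ZMod.natCast_rightInverse _

lemma dd_add_dd (hp : 0 < p) {u v : ZMod p} (h : u ≠ v) : dd u v + dd v u = p := by
  haveI : NeZero p := ⟨hp.ne'⟩
  have h1 : (v - u) ≠ 0 := sub_ne_zero.mpr (Ne.symm h)
  haveI : NeZero (v - u) := ⟨h1⟩
  have hd : dd v u = (-(v - u)).val := by unfold dd; ring_nf
  rw [hd, ZMod.val_neg_of_ne_zero]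
  have h2 : (v - u).val ≠ 0 := by rwa [ne_eq, ZMod.val_eq_zero]
  have h3 := ZMod.val_lt (v - u)
  unfold dd; omega

lemma adj_of_dd (hq : 0 < q) (h2 : 2 * q < p) {u v : ZMod p}
    (hl : q ≤ dd u v) (hr : dd u v ≤ p - q) : (circClique p q).Adj u v := by
  have hp : 0 < p := by omega
  haveI : NeZero p := ⟨hp.ne'⟩
  have hne : u ≠ v := by
    rintro rfl
    have : dd u u = 0 := by unfold dd; simp
    omega
  refine ⟨hne, dd u v, hl, hr, Or.inl ?_⟩
  rw [cast_dd hp]; ring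

lemma dd_of_adj (hq : 0 < q) (h2 : 2 * q < p) {u v : ZMod p}
    (h : (circClique p q).Adj u v) : q ≤ dd u v ∧ dd u v ≤ p - q := by
  have hp : 0 < p := by omega
  haveI : NeZero p := ⟨hp.ne'⟩
  obtain ⟨hne, k, hk1, hk2, hk3 | hk3⟩ := h
  · have : dd u v = k := by
      unfold dd; rw [hk3]; ring_nf
      exact ZMod.val_cast_of_lt (by omega)
    omega
  · have hvu : dd v u = k := by
      unfold dd; rw [hk3]; ring_nf
      exact ZMod.val_cast_of_lt (by omega)
    have := dd_add_dd hp hne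
    omega

lemma rr_natAbs_pos (hp : Odd p) (u v : ZMod p) : 1 ≤ (rr u v).natAbs := by
  obtain ⟨t, ht⟩ := hp
  have : rr u v ≠ 0 := by unfold rr; omega
  omega

lemma rr_add_rr (hp : 0 < p) {u v : ZMod p} (h : u ≠ v) : rr u v + rr v u = 0 := by
  have := dd_add_dd hp h
  unfold rr; omega

/-- key exactness: congruent sums in a short window are equal -/
lemma sum_eq_of_cong (hq : 0 < q) (h2 : 2 * q < p) (h4 : p < 4 * q)
    {s t : ℕ} (hcong : (s : ZMod p) = (t : ZMod p))
    (hs1 : 2 * q ≤ s) (hs2 : s ≤ 2 * p - 2 * q) (ht1 : 2 * q ≤ t) (ht2 : t ≤ 2 * p - 2 * q) :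
    s = t := by
  have hp : 0 < p := by omega
  haveI : NeZero p := ⟨hp.ne'⟩
  have hmod : s ≡ t [MOD p] := (ZMod.natCast_eq_natCast_iff _ _ _).1 hcong
  obtain ⟨k, hk⟩ := hmod.dvd
  have hpz : (0:ℤ) < (p:ℤ) := by omega
  have hb1 : (s:ℤ) ≤ 2 * p - 2 * q := by omega
  have hb2 : (t:ℤ) ≤ 2 * p - 2 * q := by omega
  have h5 : (p:ℤ) * k < (p:ℤ) * 1 := by omega
  have h6 : (p:ℤ) * (-1) < (p:ℤ) * k := by omega
  have hk1 : k < 1 := (mul_lt_mul_iff_right₀ hpz).1 h5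
  have hk2 : -1 < k := (mul_lt_mul_iff_right₀ hpz).1 h6
  have hk0 : k = 0 := by omega
  rw [hk0, mul_zero] at hk
  omega

/-- the two routes around a square have exactly equal displacement sums -/
lemma square_sum (hq : 0 < q) (h2 : 2 * q < p) (h4 : p < 4 * q) {a b c d : ZMod p}
    (hab : (circClique p q).Adj a b) (hbc : (circClique p q).Adj b c)
    (had : (circClique p q).Adj a d) (hdc : (circClique p q).Adj d c) :
    dd a b + dd b c = dd a d + dd d c := by
  have hp : 0 < p := by omega
  have e1 : ((dd a b + dd b c : ℕ) : ZMod p) = c - a := by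
    push_cast [cast_dd hp]; ring
  have e2 : ((dd a d + dd d c : ℕ) : ZMod p) = c - a := by
    push_cast [cast_dd hp]; ring
  have b1 := dd_of_adj hq h2 hab
  have b2 := dd_of_adj hq h2 hbc
  have b3 := dd_of_adj hq h2 had
  have b4 := dd_of_adj hq h2 hdc
  exact sum_eq_of_cong hq h2 h4 (e1.trans e2.symm) (by omega) (by omega) (by omega) (by omega)

section Walks

lemma sqstep_cons {α : Type*} {G : SimpleGraph α} {u v w : α} (h : G.Adj w u)
    {W W' : G.Walk u v} (hs : SqStep G W W') : SqStep G (W.cons h) (W'.cons h) := by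
  cases hs with
  | cancel e pre suf =>
      rw [← Walk.cons_append, ← Walk.cons_append]
      exact SqStep.cancel e (pre.cons h) suf
  | square hab hbc had hdc pre suf =>
      rw [← Walk.cons_append, ← Walk.cons_append]
      exact SqStep.square hab hbc had hdc (pre.cons h) suf

lemma sqequiv_cons {α : Type*} {G : SimpleGraph α} {u v w : α} (h : G.Adj w u)
    {W W' : G.Walk u v} (hs : SqEquiv G W W') : SqEquiv G (W.cons h) (W'.cons h) := by
  induction hs with
  | rel _ _ h' => exact Relation.EqvGen.rel _ _ (sqstep_cons h h')
  | refl _ => exact Relation.EqvGen.refl _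
  | symm _ _ _ ih => exact Relation.EqvGen.symm _ _ ih
  | trans _ _ _ _ _ ih1 ih2 => exact Relation.EqvGen.trans _ _ _ ih1 ih2

def iota {G : SimpleGraph (ZMod p)} : ∀ {u v : ZMod p}, G.Walk u v → ℤ
  | _, _, SimpleGraph.Walk.nil => 0
  | u, _, @SimpleGraph.Walk.cons _ _ _ b _ _ w => rr u b + iota w

def phi {G : SimpleGraph (ZMod p)} : ∀ {u v : ZMod p}, G.Walk u v → ℕ
  | _, _, SimpleGraph.Walk.nil => 0
  | u, _, @SimpleGraph.Walk.cons _ _ _ b _ _ w => (rr u b).natAbs + phi w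

def allD (c : ℕ) {G : SimpleGraph (ZMod p)} : ∀ {u v : ZMod p}, G.Walk u v → Prop
  | _, _, SimpleGraph.Walk.nil => True
  | u, _, @SimpleGraph.Walk.cons _ _ _ b _ _ w => dd u b = c ∧ allD c w

@[simp] lemma iota_nil {G : SimpleGraph (ZMod p)} {u : ZMod p} :
    iota (SimpleGraph.Walk.nil : G.Walk u u) = 0 := rfl
@[simp] lemma iota_cons {G : SimpleGraph (ZMod p)} {u b v : ZMod p} (h : G.Adj u b)
    (w : G.Walk b v) : iota (w.cons h) = rr u b + iota w := rfl
@[simp] lemma phi_nil {G : SimpleGraph (ZMod p)} {u : ZMod p} :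
    phi (SimpleGraph.Walk.nil : G.Walk u u) = 0 := rfl
@[simp] lemma phi_cons {G : SimpleGraph (ZMod p)} {u b v : ZMod p} (h : G.Adj u b)
    (w : G.Walk b v) : phi (w.cons h) = (rr u b).natAbs + phi w := rfl
@[simp] lemma allD_nil {G : SimpleGraph (ZMod p)} {u : ZMod p} (c : ℕ) :
    allD c (SimpleGraph.Walk.nil : G.Walk u u) = True := rfl
@[simp] lemma allD_cons {G : SimpleGraph (ZMod p)} {u b v : ZMod p} (c : ℕ) (h : G.Adj u b)
    (w : G.Walk b v) : allD c (w.cons h) = (dd u b = c ∧ allD c w) := rfl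

lemma iota_append {G : SimpleGraph (ZMod p)} {u v w : ZMod p} (W : G.Walk u v)
    (W' : G.Walk v w) : iota (W.append W') = iota W + iota W' := by
  induction W with
  | nil => simp
  | cons h W ih => simp [ih]; ring

lemma phi_append {G : SimpleGraph (ZMod p)} {u v w : ZMod p} (W : G.Walk u v)
    (W' : G.Walk v w) : phi (W.append W') = phi W + phi W' := by
  induction W with
  | nil => simp
  | cons h W ih => simp [ih]; ring

lemma allD_append {G : SimpleGraph (ZMod p)} {u v w : ZMod p} (c : ℕ) (W : G.Walk u v)
    (W' : G.Walk v w) : allD c (W.append W') ↔ allD c W ∧ allD c W' := by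
  induction W with
  | nil => simp
  | cons h W ih => simp [ih]; tauto

end Walks

end CCPI


namespace CCPI
open SimpleGraph
variable {p q : ℕ}

lemma phi_ge_length (hp : Odd p) {G : SimpleGraph (ZMod p)} {u v : ZMod p}
    (W : G.Walk u v) : W.length ≤ phi W := by
  induction W with
  | nil => simp
  | @cons a b c e W ih =>
      have := rr_natAbs_pos hp a b
      simp only [phi_cons, Walk.length_cons]
      omega

lemma iota_reverse (hp : 0 < p) {G : SimpleGraph (ZMod p)} {u v : ZMod p}
    (W : G.Walk u v) : iota W.reverse = - iota W := by
  induction W with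
  | nil => simp
  | cons h W ih =>
      rw [Walk.reverse_cons, iota_append, ih]
      have := rr_add_rr hp h.ne
      simp only [iota_cons, iota_nil]
      omega

lemma iota_sqstep (hq : 0 < q) (h2 : 2 * q < p) (h4 : p < 4 * q)
    {u v : ZMod p} {W W' : (circClique p q).Walk u v}
    (hs : SqStep (circClique p q) W W') : iota W = iota W' := by
  have hp : 0 < p := by omega
  cases hs with
  | cancel e pre suf =>
      rw [iota_append, iota_append]
      have := rr_add_rr hp e.ne
      simp only [iota_cons]
      omega
  | square hab hbc had hdc pre suf =>
      rw [iota_append, iota_append]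
      have := square_sum hq h2 h4 hab hbc had hdc
      simp only [iota_cons]
      unfold rr
      omega

lemma iota_sqequiv (hq : 0 < q) (h2 : 2 * q < p) (h4 : p < 4 * q)
    {u v : ZMod p} {W W' : (circClique p q).Walk u v}
    (hs : SqEquiv (circClique p q) W W') : iota W = iota W' := by
  induction hs with
  | rel _ _ h' => exact iota_sqstep hq h2 h4 h'
  | refl _ => rfl
  | symm _ _ _ ih => exact ih.symm
  | trans _ _ _ _ _ ih1 ih2 => exact ih1.trans ih2

lemma iota_mod (hp : 0 < p) {G : SimpleGraph (ZMod p)} {u v : ZMod p} (W : G.Walk u v) :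
    ((iota W : ℤ) : ZMod p) = 2 * (v - u) := by
  induction W with
  | nil => simp
  | cons h W ih =>
      simp only [iota_cons]
      push_cast
      rw [ih]
      unfold rr
      push_cast [cast_dd hp]
      rw [ZMod.natCast_self]
      ring

lemma iota_allD {c : ℕ} {G : SimpleGraph (ZMod p)} {u v : ZMod p} {W : G.Walk u v}
    (h : allD c W) : iota W = W.length * (2 * (c:ℤ) - p) := by
  induction W with
  | nil => simp
  | cons e W ih =>
      obtain ⟨h1, h2⟩ := h
      simp only [iota_cons, Walk.length_cons, ih h2]
      unfold rr
      rw [h1]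
      push_cast
      ring

lemma allD_reverse (hp : 0 < p) {c : ℕ} {G : SimpleGraph (ZMod p)} {u v : ZMod p}
    {W : G.Walk u v} (h : allD c W) : allD (p - c) W.reverse := by
  induction W with
  | nil => simp
  | cons e W ih =>
      obtain ⟨h1, h2⟩ := h
      rw [Walk.reverse_cons]
      rw [allD_append]
      refine ⟨ih h2, ?_, trivial⟩
      have := dd_add_dd hp e.ne
      omega

lemma length_wpow {G : SimpleGraph α} {u : α} (W : G.Walk u u) (n : ℕ) :
    (wpow W n).length = n * W.length := by
  induction n with
  | zero => simp [wpow]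
  | succ n ih => show (W.append (wpow W n)).length = _; rw [Walk.length_append, ih]; ring


lemma allD_wpow {c : ℕ} {G : SimpleGraph (ZMod p)} {u : ZMod p} {W : G.Walk u u}
    (h : allD c W) (n : ℕ) : allD c (wpow W n) := by
  induction n with
  | zero => trivial
  | succ n ih => exact (allD_append c W (wpow W n)).2 ⟨h, ih⟩

lemma getVert_allD {G : SimpleGraph (ZMod p)} {c : ℕ} :
    ∀ {u v : ZMod p} (W : G.Walk u v) (f : ℕ → ZMod p),
    (∀ i ≤ W.length, W.getVert i = f i) →
    (∀ i < W.length, dd (f i) (f (i+1)) = c) → allD c W := by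
  intro u v W
  induction W with
  | nil => intro _ _ _; trivial
  | @cons a b c e W ih =>
      intro f hf hd
      have h0 : f 0 = a := by
        have := hf 0 (Nat.zero_le _); simpa using this.symm
      have h1 : f 1 = b := by
        have := hf 1 (Nat.succ_le_succ (Nat.zero_le _))
        rw [show (1:ℕ) = 0 + 1 from rfl, Walk.getVert_cons_succ, Walk.getVert_zero] at this
        exact this.symm
      constructor
      · have := hd 0 (Nat.succ_le_succ (Nat.zero_le _))
        rwa [h0, h1] at this
      · refine ih (fun i => f (i+1)) (fun i hi => ?_) (fun i hi => ?_)
        · have := hf (i+1) (Nat.succ_le_succ hi)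
          rwa [Walk.getVert_cons_succ] at this
        · exact hd (i+1) (Nat.succ_lt_succ hi)

lemma dd_inj (hp : 0 < p) {u b b' : ZMod p} (h : dd u b = dd u b') : b = b' := by
  have := cast_dd hp u b
  rw [h, cast_dd hp u b'] at this
  exact (sub_left_inj.mp this).symm

lemma allD_uniq (hp : 0 < p) {c : ℕ} {G : SimpleGraph (ZMod p)} :
    ∀ {u v : ZMod p} (W W' : G.Walk u v), allD c W → allD c W' →
    W.length = W'.length → W = W' := by
  intro u v W
  induction W with
  | nil =>
      intro W' _ _ hl
      exact (Walk.nil_iff_eq_nil.mp (Walk.length_eq_zero_iff.mp (by simpa using hl.symm))).symm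
  | cons e W ih =>
      intro W' hW hW' hl
      cases W' with
      | nil => simp at hl
      | cons e' W'' =>
          obtain ⟨h1, h2⟩ := hW
          obtain ⟨h1', h2'⟩ := hW'
          obtain rfl := dd_inj hp (h1.trans h1'.symm)
          rw [Subsingleton.elim e' e]
          rw [ih W'' h2 h2' (by simpa using hl)]

end CCPI


namespace CCPI
open SimpleGraph
variable {p q : ℕ}

/-- measure for termination -/
def meas {G : SimpleGraph (ZMod p)} {u v : ZMod p} (W : G.Walk u v) : ℕ :=
  2 * phi W - W.length

lemma step_to (hq : 0 < q) (h2 : 2 * q < p) (k : ℕ) (hk1 : q ≤ k) (hk2 : k ≤ p - q)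
    (b : ZMod p) : ∃ x : ZMod p, (circClique p q).Adj b x ∧ dd b x = k := by
  have hpp : 0 < p := by omega
  refine ⟨b + (k : ZMod p), ?_, ?_⟩
  · apply adj_of_dd hq h2 <;>
    · unfold dd; ring_nf
      rw [ZMod.val_cast_of_lt (by omega)]
      omega
  · unfold dd; ring_nf; exact ZMod.val_cast_of_lt (by omega)

lemma spikeInsert {G : SimpleGraph (ZMod p)} {u b v x : ZMod p}
    (h : G.Adj u b) (e : G.Adj b x) (W : G.Walk b v) :
    SqEquiv G (Walk.cons h W) (Walk.cons h (Walk.cons e (Walk.cons e.symm W))) :=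
  Relation.EqvGen.symm _ _ (Relation.EqvGen.rel _ _ (SqStep.cancel e (Walk.cons h Walk.nil) W))

lemma squareHead (hq : 0 < q) (h2 : 2 * q < p) {u b c : ZMod p}
    (h : (circClique p q).Adj u b) (h₂ : (circClique p q).Adj b c)
    (a₁ a₂ : ℕ) (hsum : a₁ + a₂ = dd u b + dd b c)
    (h11 : q ≤ a₁) (h12 : a₁ ≤ p - q) (h21 : q ≤ a₂) (h22 : a₂ ≤ p - q) :
    ∃ (d : ZMod p) (h' : (circClique p q).Adj u d) (h'' : (circClique p q).Adj d c),
      dd u d = a₁ ∧ dd d c = a₂ ∧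
      ∀ {v : ZMod p} (Q : (circClique p q).Walk c v),
        SqStep (circClique p q) (Walk.cons h (Walk.cons h₂ Q))
          (Walk.cons h' (Walk.cons h'' Q)) := by
  have hpp : 0 < p := by omega
  set d := u + (a₁ : ZMod p) with hd
  have hud : dd u d = a₁ := by
    unfold dd; rw [hd]; ring_nf; exact ZMod.val_cast_of_lt (by omega)
  have hdc : dd d c = a₂ := by
    have h1 : c - u = ((a₁ + a₂ : ℕ) : ZMod p) := by
      rw [hsum]; push_cast [cast_dd hpp]; ring
    have h3 : c - d = ((a₂ : ℕ) : ZMod p) := by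
      rw [hd]
      have : c - (u + (a₁ : ZMod p)) = (c - u) - (a₁ : ZMod p) := by ring
      rw [this, h1]; push_cast; ring
    unfold dd; rw [h3]; exact ZMod.val_cast_of_lt (by omega)
  refine ⟨d, adj_of_dd hq h2 (by omega) (by omega),
    adj_of_dd hq h2 (by omega) (by omega), hud, hdc, fun Q => ?_⟩
  exact SqStep.square h h₂ _ _ Walk.nil Q

end CCPI


namespace CCPI
open SimpleGraph
variable {p q : ℕ}

lemma meas_cons_lt {G : SimpleGraph (ZMod p)} (hp : Odd p) {u b v : ZMod p}
    (h : G.Adj u b) {W W' : G.Walk b v} (hm : meas W' < meas W) :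
    meas (Walk.cons h W') < meas (Walk.cons h W) := by
  have p1 := phi_ge_length hp W
  have p2 := phi_ge_length hp W'
  have := rr_natAbs_pos hp u b
  unfold meas at *
  simp only [phi_cons, Walk.length_cons]
  omega

lemma reduceStep (hq : 0 < q) (h2 : 2 * q < p) (h4 : p < 4 * q) (hp : Odd p)
    {u v : ZMod p} (W : (circClique p q).Walk u v) :
    (allD ((p+1)/2) W ∨ allD (p - (p+1)/2) W) ∨
      ∃ W' : (circClique p q).Walk u v,
        SqEquiv (circClique p q) W W' ∧ meas W' < meas W := by
  obtain ⟨t, hpt⟩ := hp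
  have hp' : Odd p := ⟨t, hpt⟩
  have hm : (p+1)/2 = t+1 := by omega
  have hm' : p - (p+1)/2 = t := by omega
  induction W with
  | nil => exact Or.inl (Or.inl trivial)
  | @cons u b v h W ih =>
    have hb1 := dd_of_adj hq h2 h
    -- case: big first step, split it
    rcases lt_trichotomy (dd u b) (t+1) with hd1 | hd1 | hd1
    · rcases Nat.lt_or_ge (dd u b) t with hd1' | hd1'
      · -- dd u b ≤ t - 1 : split into (dd+1, t, t)
        obtain ⟨x, e, hbx⟩ := step_to hq h2 (t+1) (by omega) (by omega) b
        have hxb : dd x b = t := by have := dd_add_dd (by omega) e.ne; omega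
        have e1 := spikeInsert h e W
        obtain ⟨d, h', h'', hud, hdc, hstep⟩ :=
          squareHead hq h2 h e (dd u b + 1) t (by omega) (by omega) (by omega)
            (by omega) (by omega)
        refine Or.inr ⟨Walk.cons h' (Walk.cons h'' (Walk.cons e.symm W)), ?_, ?_⟩
        · exact Relation.EqvGen.trans _ _ _ e1
            (Relation.EqvGen.rel _ _ (hstep (Walk.cons e.symm W)))
        · have pW := phi_ge_length hp' W
          unfold meas
          simp only [phi_cons, Walk.length_cons]
          unfold rr
          rw [hud, hdc, hxb]
          omega
      · -- dd u b = t : first step is a (-1)-step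
        have hd1'' : dd u b = t := by omega
        cases W with
        | nil =>
            refine Or.inl (Or.inr ?_)
            rw [hm']
            exact ⟨hd1'', trivial⟩
        | @cons _ c _ h₂ W₂ =>
            have hb2 := dd_of_adj hq h2 h₂
            rcases Nat.lt_or_ge (dd b c) (t+1) with hd2 | hd2
            · -- descending tail step: recurse
              rcases ih with (hall | hall) | ⟨W', he, hme⟩
              · rw [hm] at hall; have := hall.1; omega
              · exact Or.inl (Or.inr (by rw [hm']; exact ⟨hd1'', by rw [← hm']; exact hall⟩))
              · exact Or.inr ⟨Walk.cons h W', sqequiv_cons h he, meas_cons_lt hp' h hme⟩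
            · rcases Nat.lt_or_ge (t+1) (dd b c) with hd2' | hd2'
              · -- square: (t, big) → (big - 1, t+1)
                obtain ⟨d, h', h'', hud, hdc, hstep⟩ :=
                  squareHead hq h2 h h₂ (dd b c - 1) (t+1) (by omega) (by omega)
                    (by omega) (by omega) (by omega)
                refine Or.inr ⟨Walk.cons h' (Walk.cons h'' W₂),
                  Relation.EqvGen.rel _ _ (hstep W₂), ?_⟩
                have pW := phi_ge_length hp' W₂
                unfold meas
                simp only [phi_cons, Walk.length_cons]
                unfold rr
                rw [hud, hdc, hd1'']
                omega
              · -- cancel : dd b c = t + 1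
                have hd2'' : dd b c = t+1 := by omega
                have hcu : c = u := by
                  have h1 : c - u = ((dd u b + dd b c : ℕ) : ZMod p) := by
                    push_cast [cast_dd (show 0 < p by omega)]; ring
                  rw [hd1'', hd2''] at h1
                  have : ((t + (t+1) : ℕ) : ZMod p) = 0 := by
                    have : (t + (t+1) : ℕ) = p := by omega
                    rw [this]; exact ZMod.natCast_self p
                  rw [this] at h1
                  exact sub_eq_zero.mp h1
                subst hcu
                refine Or.inr ⟨W₂, ?_, ?_⟩
                · rw [Subsingleton.elim h₂ h.symm]
                  exact Relation.EqvGen.rel _ _ (SqStep.cancel h Walk.nil W₂)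
                · have pW := phi_ge_length hp' W₂
                  unfold meas
                  simp only [phi_cons, Walk.length_cons]
                  unfold rr
                  rw [hd1'', hd2'']
                  omega
    · -- dd u b = t + 1 : first step is a (+1)-step
      cases W with
      | nil =>
          refine Or.inl (Or.inl ?_)
          rw [hm]
          exact ⟨hd1, trivial⟩
      | @cons _ c _ h₂ W₂ =>
          have hb2 := dd_of_adj hq h2 h₂
          rcases Nat.lt_or_ge t (dd b c) with hd2 | hd2
          · -- ascending tail step: recurse
            rcases ih with (hall | hall) | ⟨W', he, hme⟩
            · exact Or.inl (Or.inl (by rw [hm]; exact ⟨hd1, by rw [← hm]; exact hall⟩))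
            · rw [hm'] at hall; have := hall.1; omega
            · exact Or.inr ⟨Walk.cons h W', sqequiv_cons h he, meas_cons_lt hp' h hme⟩
          · rcases Nat.lt_or_ge (dd b c) t with hd2' | hd2'
            · -- square: (t+1, small) → (small + 1, t)
              obtain ⟨d, h', h'', hud, hdc, hstep⟩ :=
                squareHead hq h2 h h₂ (dd b c + 1) t (by omega) (by omega)
                  (by omega) (by omega) (by omega)
              refine Or.inr ⟨Walk.cons h' (Walk.cons h'' W₂),
                Relation.EqvGen.rel _ _ (hstep W₂), ?_⟩
              have pW := phi_ge_length hp' W₂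
              unfold meas
              simp only [phi_cons, Walk.length_cons]
              unfold rr
              rw [hud, hdc, hd1]
              omega
            · -- cancel : dd b c = t
              have hd2'' : dd b c = t := by omega
              have hcu : c = u := by
                have h1 : c - u = ((dd u b + dd b c : ℕ) : ZMod p) := by
                  push_cast [cast_dd (show 0 < p by omega)]; ring
                rw [hd1, hd2''] at h1
                have : (((t+1) + t : ℕ) : ZMod p) = 0 := by
                  have : ((t+1) + t : ℕ) = p := by omega
                  rw [this]; exact ZMod.natCast_self p
                rw [this] at h1
                exact sub_eq_zero.mp h1
              subst hcu
              refine Or.inr ⟨W₂, ?_, ?_⟩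
              · rw [Subsingleton.elim h₂ h.symm]
                exact Relation.EqvGen.rel _ _ (SqStep.cancel h Walk.nil W₂)
              · have pW := phi_ge_length hp' W₂
                unfold meas
                simp only [phi_cons, Walk.length_cons]
                unfold rr
                rw [hd1, hd2'']
                omega
    · -- dd u b ≥ t + 2 : split into (dd-1, t+1, t+1)
      obtain ⟨x, e, hbx⟩ := step_to hq h2 t (by omega) (by omega) b
      have hxb : dd x b = t+1 := by have := dd_add_dd (by omega) e.ne; omega
      have e1 := spikeInsert h e W
      obtain ⟨d, h', h'', hud, hdc, hstep⟩ :=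
        squareHead hq h2 h e (dd u b - 1) (t+1) (by omega) (by omega) (by omega)
          (by omega) (by omega)
      refine Or.inr ⟨Walk.cons h' (Walk.cons h'' (Walk.cons e.symm W)), ?_, ?_⟩
      · exact Relation.EqvGen.trans _ _ _ e1
          (Relation.EqvGen.rel _ _ (hstep (Walk.cons e.symm W)))
      · have pW := phi_ge_length hp' W
        unfold meas
        simp only [phi_cons, Walk.length_cons]
        unfold rr
        rw [hud, hdc, hxb]
        omega

end CCPI


namespace CCPI
open SimpleGraph
variable {p q : ℕ}

lemma iota_wpow {G : SimpleGraph (ZMod p)} {u : ZMod p} (W : G.Walk u u) (n : ℕ) :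
    iota (wpow W n) = n * iota W := by
  induction n with
  | zero => simp [wpow]
  | succ n ih => show iota (W.append (wpow W n)) = _; rw [iota_append, ih]; push_cast; ring

lemma wzpow_coe_nat {G : SimpleGraph α} {u : α} (W : G.Walk u u) (k : ℕ) :
    wzpow W (k : ℤ) = wpow W k := rfl

lemma wzpow_neg_nat {G : SimpleGraph α} {u : α} (W : G.Walk u u) (k : ℕ) :
    wzpow W (-(k : ℤ)) = wpow W.reverse k := by
  cases k with
  | zero => rfl
  | succ n => rfl

lemma iota_wzpow (hpp : 0 < p) {G : SimpleGraph (ZMod p)} {u : ZMod p}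
    (W : G.Walk u u) (d : ℤ) : iota (wzpow W d) = d * iota W := by
  cases d with
  | ofNat k => rw [show Int.ofNat k = (k:ℤ) from rfl, wzpow_coe_nat, iota_wpow]
  | negSucc n =>
      show iota (wpow W.reverse (n+1)) = _
      rw [iota_wpow, iota_reverse hpp]
      push_cast [Int.negSucc_eq]
      ring

end CCPI

/-- in `K_{p/q}` with `2 < p/q < 4` and `p` odd, every closed walk based
at `0` is square-equivalent to a power of the generator `O` (the closed walk of
length `p` whose `(i+1)`-th edge goes from `i·⌈p/2⌉` to `(i+1)·⌈p/2⌉` mod `p`),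
and distinct powers of `O` are inequivalent; hence the group of `~`-classes of
closed walks based at `0` is isomorphic to `ℤ`. -/
theorem circClique_pi_eq_int {p q : ℕ} (hq : 0 < q) (h2 : 2 * q < p) (h4 : p < 4 * q)
    (hp : Odd p) (O : (circClique p q).Walk (0 : ZMod p) 0) (hOlen : O.length = p)
    (hO : ∀ i ≤ p, O.getVert i = ((i * ((p + 1) / 2) : ℕ) : ZMod p)) :
    (∀ W : (circClique p q).Walk (0 : ZMod p) 0, ∃ d : ℤ, SqEquiv (circClique p q) W (wzpow O d)) ∧
    (∀ d d' : ℤ, SqEquiv (circClique p q) (wzpow O d) (wzpow O d') → d = d') := by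
  classical
  open CCPI in
  obtain ⟨t, hpt⟩ := hp
  have hp' : Odd p := ⟨t, hpt⟩
  have hpp : 0 < p := by omega
  haveI : NeZero p := ⟨hpp.ne'⟩
  have hm : (p+1)/2 = t+1 := by omega
  -- O has all steps of displacement (p+1)/2
  have hallO : allD ((p+1)/2) O := by
    apply getVert_allD O (fun i => ((i * ((p + 1) / 2) : ℕ) : ZMod p))
    · intro i hi
      exact hO i (by omega)
    · intro i hi
      unfold dd
      have hcast : (((i+1) * ((p+1)/2) : ℕ) : ZMod p) - ((i * ((p+1)/2) : ℕ) : ZMod p)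
          = ((((p+1)/2 : ℕ)) : ZMod p) := by push_cast; ring
      rw [hcast]
      rw [ZMod.val_cast_of_lt (by omega)]
  have hiO : iota O = p := by
    rw [iota_allD hallO, hOlen, hm]
    have : (2 * ((t+1 : ℕ) : ℤ) - (p:ℤ)) = 1 := by push_cast; omega
    rw [this]; ring
  constructor
  · -- every closed walk is equivalent to a power of O
    have key : ∀ N (W : (circClique p q).Walk (0 : ZMod p) 0), meas W ≤ N →
        ∃ d : ℤ, SqEquiv (circClique p q) W (wzpow O d) := by
      intro N
      induction N using Nat.strong_induction_on with
      | _ N ihN =>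
        intro W hWN
        rcases reduceStep hq h2 h4 hp' W with (hall | hall) | ⟨W', he, hme⟩
        · -- all steps (p+1)/2 : W is a nonnegative power of O
          have hiW : iota W = W.length := by
            rw [iota_allD hall, hm]
            have : (2 * ((t+1 : ℕ) : ℤ) - (p:ℤ)) = 1 := by push_cast; omega
            rw [this]; ring
          have hdvd : (p:ℤ) ∣ iota W := by
            have h0 := iota_mod hpp W
            rw [sub_self, mul_zero] at h0
            exact (ZMod.intCast_zmod_eq_zero_iff_dvd _ p).1 h0
          rw [hiW] at hdvd
          obtain ⟨k, hk⟩ := (Int.natCast_dvd_natCast (m := p)).1 hdvd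
          have hWeq : W = wpow O k :=
            allD_uniq hpp W (wpow O k) hall (allD_wpow hallO k)
              (by rw [length_wpow, hOlen, hk, Nat.mul_comm])
          refine ⟨(k : ℤ), ?_⟩
          rw [hWeq, wzpow_coe_nat]
          exact Relation.EqvGen.refl _
        · -- all steps p - (p+1)/2 : W is a nonpositive power of O
          have hiW : iota W = -(W.length : ℤ) := by
            rw [iota_allD hall, hm]
            have : (2 * ((p - (t+1) : ℕ) : ℤ) - (p:ℤ)) = -1 := by
              have : p - (t+1) = t := by omega
              rw [this]; push_cast; omega
            rw [this]; ring
          have hdvd : (p:ℤ) ∣ iota W := by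
            have h0 := iota_mod hpp W
            rw [sub_self, mul_zero] at h0
            exact (ZMod.intCast_zmod_eq_zero_iff_dvd _ p).1 h0
          rw [hiW, dvd_neg] at hdvd
          obtain ⟨k, hk⟩ := (Int.natCast_dvd_natCast (m := p)).1 hdvd
          have hallOr : allD (p - (p+1)/2) O.reverse := allD_reverse hpp hallO
          have hWeq : W = wpow O.reverse k :=
            allD_uniq hpp W (wpow O.reverse k) hall (allD_wpow hallOr k)
              (by rw [length_wpow, Walk.length_reverse, hOlen, hk, Nat.mul_comm])
          refine ⟨-(k : ℤ), ?_⟩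
          rw [hWeq, wzpow_neg_nat]
          exact Relation.EqvGen.refl _
        · obtain ⟨d, hd⟩ := ihN (meas W') (lt_of_lt_of_le hme hWN) W' le_rfl
          exact ⟨d, Relation.EqvGen.trans _ _ _ he hd⟩
    exact fun W => key (meas W) W le_rfl
  · -- distinct powers are inequivalent
    intro d d' hdd
    have h1 := iota_sqequiv hq h2 h4 hdd
    rw [iota_wzpow hpp O d, iota_wzpow hpp O d', hiO] at h1
    have hpz : (p : ℤ) ≠ 0 := by omega
    exact mul_right_cancel₀ hpz h1
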